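/- arXiv:1807.01108 — 2 statements merged into one kernel-verified Lean document; each statement's English description precedes it below -/
import Mathlib

section
/- Let m ≥ 3, λ ≠ 0, and let f₀ : (0, ∞) → ℝ be a C² solution of f'' + ((m−1)/r − r/2) f' = −λ f. If f₀(r) converges to a finite nonzero limit as r → ∞, then a contradiction follows; hence any such solution converging at infinity must converge to 0 or be constant (and if λ ≠ 0, a nonconstant solution cannot have a finite limit at infinity). -/
open Real Filter

private lemma myAnti {s : Set ℝ} (hs : Convex ℝ s) (h h' : ℝ → ℝ)
    (hd : ∀ x ∈ s, HasDerivAt h (h' x) x) (hle : ∀ x ∈ interior s, h' x ≤ 0) :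
    AntitoneOn h s :=
  antitoneOn_of_deriv_nonpos hs (fun x hx => (hd x hx).continuousAt.continuousWithinAt)
    (fun x hx => ((hd x (interior_subset hx)).differentiableAt).differentiableWithinAt)
    (fun x hx => by rw [(hd x (interior_subset hx)).deriv]; exact hle x hx)

private lemma aux (m : ℕ) (hm : 3 ≤ m)
    (lam : ℝ) (A : ℝ) (hpos : 0 < lam * A)
    (f f' f'' : ℝ → ℝ)
    (hf : ∀ r > (0 : ℝ), HasDerivAt f (f' r) r)
    (hf' : ∀ r > (0 : ℝ), HasDerivAt f' (f'' r) r)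
    (hode : ∀ r > (0 : ℝ), f'' r + (((m : ℝ) - 1) / r - r / 2) * f' r = -lam * f r)
    (hlim : Tendsto f atTop (nhds A)) :
    False := by
  obtain ⟨n, rfl⟩ : ∃ n, m = n + 3 := ⟨m - 3, by omega⟩
  set φ : ℝ → ℝ := fun r => r ^ (n + 2) * Real.exp (-(r ^ 2) / 4) with hφ
  set g : ℝ → ℝ := fun r => φ r * f' r with hg
  have hφpos : ∀ r > (0 : ℝ), 0 < φ r := fun r hr =>
    mul_pos (pow_pos hr _) (Real.exp_pos _)
  have hφd : ∀ r > (0 : ℝ), HasDerivAt φ (((((n : ℝ) + 3) - 1) / r - r / 2) * φ r) r := by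
    intro r hr
    have h1 : HasDerivAt (fun r : ℝ => r ^ (n + 2)) ((n + 2) * r ^ (n + 1)) r := by
      simpa using hasDerivAt_pow (n + 2) r
    have h2 : HasDerivAt (fun r : ℝ => -(r ^ 2) / 4) (-(2 * r) / 4) r := by
      simpa using ((hasDerivAt_pow 2 r).neg).div_const 4
    have := h1.mul h2.exp
    refine this.congr_deriv ?_
    have hrne : r ≠ 0 := ne_of_gt hr
    simp only [hφ]
    field_simp
    ring
  have hgd : ∀ r > (0 : ℝ), HasDerivAt g (-(lam * f r) * φ r) r := by
    intro r hr
    have := (hφd r hr).mul (hf' r hr)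
    refine this.congr_deriv ?_
    have e := hode r hr
    push_cast at e
    have e2 : -(lam * f r) = f'' r + (((n : ℝ) + 3 - 1) / r - r / 2) * f' r := by linarith
    rw [e2]; ring
  set ε : ℝ := lam * A / 2 with hε
  have hεpos : 0 < ε := by positivity
  have hev : ∀ᶠ r in atTop, ε ≤ lam * f r := by
    have : Tendsto (fun r => lam * f r) atTop (nhds (lam * A)) := hlim.const_mul lam
    exact this.eventually_const_le (by linarith)
  obtain ⟨R₀, hR₀⟩ := hev.exists_forall_of_atTop
  set R : ℝ := max R₀ 1 with hRdef
  have hR1 : (1 : ℝ) ≤ R := le_max_right _ _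
  have hRpos : (0 : ℝ) < R := by linarith
  have hR : ∀ r, R ≤ r → ε ≤ lam * f r := fun r hr =>
    hR₀ r (le_trans (le_max_left _ _) hr)
  have hkey : ∀ r, R ≤ r → -(lam * f r) * φ r ≤ -ε * φ r := by
    intro r hr
    have h1 := hR r hr
    have h2 := hφpos r (by linarith)
    nlinarith
  by_cases hc : ∃ r, R ≤ r ∧ g r < 0
  · -- Case A : g becomes negative, so f' → -∞ and f → -∞
    obtain ⟨r₁, hr₁R, hr₁neg⟩ := hc
    have hr₁pos : (0 : ℝ) < r₁ := lt_of_lt_of_le hRpos hr₁R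
    have hanti : AntitoneOn g (Set.Ici r₁) := by
      apply myAnti (convex_Ici r₁) g (fun r => -(lam * f r) * φ r)
        (fun x hx => hgd x (lt_of_lt_of_le hr₁pos hx))
      intro x hx
      rw [interior_Ici] at hx
      have hxR : R ≤ x := le_trans hr₁R (le_of_lt hx)
      have := hkey x hxR
      have hφx := hφpos x (lt_trans hr₁pos hx)
      nlinarith
    have hφ0 : Tendsto φ atTop (nhds 0) := by
      have hb : Tendsto (fun r : ℝ => r ^ (n + 2) * Real.exp (-r)) atTop (nhds 0) :=
        tendsto_pow_mul_exp_neg_atTop_nhds_zero (n + 2)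
      apply tendsto_of_tendsto_of_tendsto_of_le_of_le' tendsto_const_nhds hb
      · filter_upwards [eventually_ge_atTop (0 : ℝ)] with r hr
        positivity
      · filter_upwards [eventually_ge_atTop (4 : ℝ)] with r hr
        have h4 : -(r ^ 2) / 4 ≤ -r := by nlinarith
        exact mul_le_mul_of_nonneg_left (Real.exp_le_exp.2 h4) (by positivity)
    have hev2 : ∀ᶠ r in atTop, φ r < -g r₁ :=
      hφ0.eventually_lt_const (by linarith)
    obtain ⟨R₂, hR₂⟩ := (hev2.and (eventually_ge_atTop r₁)).exists_forall_of_atTop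
    have hf'le : ∀ r, R₂ ≤ r → f' r ≤ -1 := by
      intro r hr
      obtain ⟨h1, h2⟩ := hR₂ r hr
      have hrpos : (0 : ℝ) < r := lt_of_lt_of_le hr₁pos h2
      have hφr := hφpos r hrpos
      have hgle : g r ≤ g r₁ := hanti (Set.self_mem_Ici) h2 h2
      have hgr : φ r * f' r = g r := rfl
      have h5 : φ r * f' r ≤ φ r * (-1) := by rw [hgr]; nlinarith
      exact le_of_mul_le_mul_left h5 hφr
    have hR₂pos : (0 : ℝ) < R₂ := lt_of_lt_of_le hr₁pos ((hR₂ R₂ le_rfl).2)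
    have hanti2 : AntitoneOn (fun r => f r + r) (Set.Ici R₂) := by
      apply myAnti (convex_Ici R₂) _ (fun r => f' r + 1)
        (fun x hx => ((hf x (lt_of_lt_of_le hR₂pos hx)).add (hasDerivAt_id x)))
      intro x hx
      rw [interior_Ici] at hx
      linarith [hf'le x hx.le]
    have hfle : ∀ r, R₂ ≤ r → f r ≤ f R₂ + R₂ - r := by
      intro r hr
      have := hanti2 (Set.self_mem_Ici) hr hr
      simp only at this
      linarith
    have hev3 : ∀ᶠ r in atTop, A - 1 ≤ f r := hlim.eventually_const_le (by linarith)
    obtain ⟨r, hr'⟩ := ((hev3.and (eventually_ge_atTop R₂)).and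
      (eventually_ge_atTop (f R₂ + R₂ - A + 2))).exists
    obtain ⟨⟨ha, hb2⟩, hc2⟩ := hr'
    linarith [hfle r hb2]
  · -- Case B : g ≥ 0 on [R, ∞), quantitative lower bound on f'
    push_neg at hc
    set c' : ℝ := ε * Real.exp (-(3 : ℝ) / 4) with hc'
    have hc'pos : 0 < c' := by positivity
    have hf'ge : ∀ r, R ≤ r → c' / r ≤ f' r := by
      intro r hrR
      have hr1 : (1 : ℝ) ≤ r := le_trans hR1 hrR
      have hrpos : (0 : ℝ) < r := by linarith
      set δ : ℝ := 1 / r with hδ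
      have hδpos : 0 < δ := by positivity
      set c : ℝ := φ r * Real.exp (-(3 : ℝ) / 4) with hcdef
      have hφr := hφpos r hrpos
      have hcpos : 0 < c := by positivity
      have hφlb : ∀ s ∈ Set.Icc r (r + δ), c ≤ φ s := by
        intro s hs
        obtain ⟨hs1, hs2⟩ := hs
        have hspos : 0 < s := lt_of_lt_of_le hrpos hs1
        have hpow : r ^ (n + 2) ≤ s ^ (n + 2) :=
          pow_le_pow_left₀ (le_of_lt hrpos) hs1 _
        have hsq : s ^ 2 ≤ r ^ 2 + 3 := by
          have hδle : δ ≤ 1 := by rw [hδ, div_le_one hrpos]; linarith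
          have h1r : δ * r = 1 := by rw [hδ, one_div, inv_mul_cancel₀ hrpos.ne']
          nlinarith
        have hexp : Real.exp (-(r ^ 2 + 3) / 4) ≤ Real.exp (-(s ^ 2) / 4) :=
          Real.exp_le_exp.2 (by linarith)
        have hee : Real.exp (-(r ^ 2) / 4) * Real.exp (-(3 : ℝ) / 4)
            = Real.exp (-(r ^ 2 + 3) / 4) := by
          rw [← Real.exp_add]; congr 1; ring
        have hcc : c = r ^ (n + 2) * Real.exp (-(r ^ 2 + 3) / 4) := by
          rw [hcdef, hφ]; dsimp only; rw [mul_assoc, hee]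
        rw [hcc, hφ]
        exact mul_le_mul hpow hexp (le_of_lt (Real.exp_pos _)) (by positivity)
      have hH : AntitoneOn (fun s => g s + ε * c * s) (Set.Icc r (r + δ)) := by
        apply myAnti (convex_Icc _ _) _ (fun s => -(lam * f s) * φ s + ε * c)
        · intro x hx
          have := (hgd x (lt_of_lt_of_le hrpos hx.1)).add
            ((hasDerivAt_id x).const_mul (ε * c))
          refine this.congr_deriv ?_
          ring
        · intro x hx
          rw [interior_Icc] at hx
          have hxR : R ≤ x := le_trans hrR hx.1.le
          have h1 := hkey x hxR
          have h2 := hφlb x ⟨hx.1.le, hx.2.le⟩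
          nlinarith
      have hmem1 : r ∈ Set.Icc r (r + δ) := ⟨le_rfl, by linarith⟩
      have hmem2 : r + δ ∈ Set.Icc r (r + δ) := ⟨by linarith, le_rfl⟩
      have h3 := hH hmem1 hmem2 (by linarith)
      simp only at h3
      have hg2 : 0 ≤ g (r + δ) := hc (r + δ) (by linarith)
      have hglb : ε * c * δ ≤ g r := by nlinarith
      have h6 : φ r * (c' / r) ≤ φ r * f' r := by
        have e1 : φ r * (c' / r) = ε * c * δ := by
          rw [hc', hcdef, hδ]; field_simp
        have e2 : φ r * f' r = g r := rfl
        rw [e1, e2]; exact hglb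
      exact le_of_mul_le_mul_left h6 hφr
    have hanti3 : AntitoneOn (fun s => c' * Real.log s - f s) (Set.Ici R) := by
      apply myAnti (convex_Ici R) _ (fun s => c' / s - f' s)
      · intro x hx
        have hxpos : 0 < x := lt_of_lt_of_le hRpos hx
        have := ((Real.hasDerivAt_log (ne_of_gt hxpos)).const_mul c').sub (hf x hxpos)
        refine this.congr_deriv ?_
        ring
      · intro x hx
        rw [interior_Ici] at hx
        linarith [hf'ge x hx.le]
    have hfge : ∀ r, R ≤ r → f R + c' * (Real.log r - Real.log R) ≤ f r := by
      intro r hr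
      have := hanti3 (Set.self_mem_Ici) hr hr
      simp only at this
      linarith
    have hev4 : ∀ᶠ r in atTop, f r ≤ A + 1 := hlim.eventually_le_const (by linarith)
    have hlog : Tendsto (fun r : ℝ => f R + c' * (Real.log r - Real.log R)) atTop atTop := by
      apply Filter.tendsto_atTop_add_const_left
      apply Tendsto.const_mul_atTop hc'pos
      exact Filter.tendsto_atTop_add_const_right _ _ Real.tendsto_log_atTop
    obtain ⟨r, hr'⟩ := ((hev4.and (eventually_ge_atTop R)).and
      (hlog.eventually_ge_atTop (A + 2))).exists
    obtain ⟨⟨ha, hb2⟩, hc2⟩ := hr'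
    linarith [hfge r hb2]

/-- Radial reduction of the eigenvalue equation for the drifted Laplacian: if `λ ≠ 0` and
`f₀` is a `C²` solution on `(0,∞)` of `f'' + ((m−1)/r − r/2) f' = −λ f` which converges to
a finite nonzero limit `A` as `r → ∞`, then a contradiction follows. -/
theorem radial_drifted_eigenfunction_no_nonzero_limit (m : ℕ) (hm : 3 ≤ m)
    (lam : ℝ) (hlam : lam ≠ 0) (A : ℝ) (hA : A ≠ 0)
    (f f' f'' : ℝ → ℝ)
    (hf : ∀ r > (0 : ℝ), HasDerivAt f (f' r) r)
    (hf' : ∀ r > (0 : ℝ), HasDerivAt f' (f'' r) r)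
    (hode : ∀ r > (0 : ℝ), f'' r + (((m : ℝ) - 1) / r - r / 2) * f' r = -lam * f r)
    (hlim : Tendsto f atTop (nhds A)) :
    False := by
  rcases lt_trichotomy (lam * A) 0 with h | h | h
  · exact aux m hm lam (-A) (by linarith)
      (fun r => -f r) (fun r => -f' r) (fun r => -f'' r)
      (fun r hr => (hf r hr).neg) (fun r hr => (hf' r hr).neg)
      (fun r hr => by have := hode r hr; linarith [this, mul_comm lam (f r)]
      ) hlim.neg
  · exact absurd h (mul_ne_zero hlam hA)
  · exact aux m hm lam A h f f' f'' hf hf' hode hlim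
end

section
/- Let m ≥ 3, λ ∈ ℝ, λ_k > 0, and let f be a C² solution on (0, ∞) of (f' r^{m−1} e^{-r²/4})' = r^{m−1} e^{-r²/4} V(r) f with V(r) = −λ e^{-r²/(2(m−2))} + λ_k/r² > 0 for r ≥ R. If f is not identically zero on [R, ∞) and f(r) → 0 as r → ∞, then a contradiction arises; hence f ≡ 0 on [R, ∞). -/
open Real Filter


private lemma mono_Icc {F F' : ℝ → ℝ} {a b : ℝ}
    (h : ∀ x ∈ Set.Icc a b, HasDerivAt F (F' x) x)
    (h' : ∀ x ∈ Set.Ioo a b, 0 ≤ F' x) (hab : a ≤ b) : F a ≤ F b := by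
  have hm := monotoneOn_of_deriv_nonneg (convex_Icc a b)
    (fun x hx => (h x hx).continuousAt.continuousWithinAt)
    (fun x hx => by
      rw [interior_Icc] at hx
      exact ((h x (Set.Ioo_subset_Icc_self hx)).differentiableAt).differentiableWithinAt)
    (fun x hx => by
      rw [interior_Icc] at hx
      rw [(h x (Set.Ioo_subset_Icc_self hx)).deriv]
      exact h' x hx)
  exact hm (Set.left_mem_Icc.2 hab) (Set.right_mem_Icc.2 hab) hab

private lemma strict_Icc {F F' : ℝ → ℝ} {a b : ℝ}
    (h : ∀ x ∈ Set.Icc a b, HasDerivAt F (F' x) x)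
    (h' : ∀ x ∈ Set.Ioo a b, 0 < F' x) (hab : a < b) : F a < F b := by
  have hm := strictMonoOn_of_deriv_pos (convex_Icc a b)
    (fun x hx => (h x hx).continuousAt.continuousWithinAt)
    (fun x hx => by
      rw [interior_Icc] at hx
      rw [(h x (Set.Ioo_subset_Icc_self hx)).deriv]
      exact h' x hx)
  exact hm (Set.left_mem_Icc.2 hab.le) (Set.right_mem_Icc.2 hab.le) hab

private lemma eventually_gt_right {F : ℝ → ℝ} {x d : ℝ} (h : HasDerivAt F d x) (hd : 0 < d) :
    ∀ᶠ s in nhdsWithin x (Set.Ioi x), F x < F s := by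
  have hs := hasDerivAt_iff_tendsto_slope.1 h
  have h1 : ∀ᶠ s in nhdsWithin x {x}ᶜ, 0 < slope F x s := hs (Ioi_mem_nhds hd)
  have h2 : ∀ᶠ s in nhdsWithin x (Set.Ioi x), 0 < slope F x s :=
    h1.filter_mono (nhdsWithin_mono x (fun s hs => ne_of_gt hs))
  have h3 : ∀ᶠ s in nhdsWithin x (Set.Ioi x), s ∈ Set.Ioi x := self_mem_nhdsWithin
  filter_upwards [h2, h3] with s hslope hmem
  have hx : (0:ℝ) < s - x := sub_pos.2 hmem
  have : 0 < (F s - F x) / (s - x) := by rwa [slope_def_field] at hslope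
  rcases div_pos_iff.1 this with ⟨h4, _⟩ | ⟨_, h5⟩
  · linarith
  · linarith

private lemma eventually_lt_right {F : ℝ → ℝ} {x d : ℝ} (h : HasDerivAt F d x) (hd : d < 0) :
    ∀ᶠ s in nhdsWithin x (Set.Ioi x), F s < F x := by
  have := eventually_gt_right h.neg (neg_pos.2 hd)
  filter_upwards [this] with s hs
  simpa using hs


private lemma key (m : ℕ) (R : ℝ) (hR : 0 < R) (f f' V : ℝ → ℝ)
    (hVpos : ∀ r ≥ R, 0 < V r)
    (hf : ∀ r ≥ R, HasDerivAt f (f' r) r)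
    (hdiv : ∀ r ≥ R, HasDerivAt (fun s : ℝ => f' s * s ^ (m - 1) * Real.exp (-s ^ 2 / 4))
      (r ^ (m - 1) * Real.exp (-r ^ 2 / 4) * (V r * f r)) r)
    (a : ℝ) (ha : R ≤ a) (hfa : 0 < f a) (hga : 0 ≤ f' a) :
    ∀ r ≥ a, f a ≤ f r := by
  set g : ℝ → ℝ := fun s : ℝ => f' s * s ^ (m - 1) * Real.exp (-s ^ 2 / 4) with hgdef
  by_contra hcon
  push_neg at hcon
  obtain ⟨r', hr', hfr'⟩ := hcon
  set A : Set ℝ := {r : ℝ | a ≤ r ∧ f r < f a} with hA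
  have hAne : A.Nonempty := ⟨r', hr', hfr'⟩
  have hAbd : BddBelow A := ⟨a, fun x hx => hx.1⟩
  set b := sInf A with hbdef
  have hb : a ≤ b := le_csInf hAne (fun x hx => hx.1)
  have hbR : R ≤ b := ha.trans hb
  have hpre : ∀ s, a ≤ s → s < b → f a ≤ f s := by
    intro s h1 h2
    by_contra hlt
    push_neg at hlt
    exact absurd (csInf_le hAbd ⟨h1, hlt⟩) (not_le.2 h2)
  have hcontb : ContinuousAt f b := (hf b hbR).continuousAt
  have hfb_le : f b ≤ f a := by
    by_contra hgt
    push_neg at hgt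
    have hnb : {s : ℝ | f a < f s} ∈ nhds b := hcontb (Ioi_mem_nhds hgt)
    obtain ⟨ε, hε, hball⟩ := Metric.mem_nhds_iff.1 hnb
    have hlb : ∀ x ∈ A, b + ε / 2 ≤ x := by
      intro x hx
      have hxb : b ≤ x := csInf_le hAbd hx
      by_contra hxl
      push_neg at hxl
      have : x ∈ Metric.ball b ε := by
        rw [Metric.mem_ball, Real.dist_eq, abs_lt]
        constructor <;> linarith
      exact absurd (hball this) (not_lt.2 hx.2.le)
    have := le_csInf hAne hlb
    linarith [this]
  have hfb_ge : f a ≤ f b := by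
    rcases eq_or_lt_of_le hb with heq | hlt
    · rw [← heq]
    · have htend : Tendsto f (nhdsWithin b (Set.Iio b)) (nhds (f b)) :=
        hcontb.continuousWithinAt.tendsto
      refine ge_of_tendsto htend ?_
      have hmem : Set.Ico a b ∈ nhdsWithin b (Set.Iio b) :=
        Ico_mem_nhdsLT hlt
      filter_upwards [hmem] with s hs
      exact hpre s hs.1 hs.2
  have hfb : f b = f a := le_antisymm hfb_le hfb_ge
  have hbpos : 0 < b := lt_of_lt_of_le hR hbR
  -- g b ≥ 0
  have hga' : 0 ≤ g a := by
    have h1 : (0:ℝ) ≤ f' a * a ^ (m - 1) :=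
      mul_nonneg hga (pow_nonneg (le_of_lt (lt_of_lt_of_le hR ha)) _)
    exact mul_nonneg h1 (Real.exp_pos _).le
  have hgb : 0 ≤ g b := by
    rcases eq_or_lt_of_le hb with heq | hlt
    · rw [← heq]; exact hga'
    · refine le_trans hga' ?_
      refine mono_Icc (F := g) (F' := fun s => s ^ (m - 1) * Real.exp (-s ^ 2 / 4) * (V s * f s))
        (fun x hx => hdiv x (ha.trans hx.1)) ?_ hb
      intro x hx
      have hxR : R ≤ x := ha.trans hx.1.le
      have hxpos : 0 < x := lt_of_lt_of_le hR hxR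
      have hfx : 0 < f x := lt_of_lt_of_le hfa (hpre x hx.1.le hx.2)
      have : 0 < x ^ (m - 1) * Real.exp (-x ^ 2 / 4) * (V x * f x) := by
        apply mul_pos (mul_pos (pow_pos hxpos _) (Real.exp_pos _)) (mul_pos (hVpos x hxR) hfx)
      exact this.le
  -- derivative of g at b is positive
  have hgb' : 0 < b ^ (m - 1) * Real.exp (-b ^ 2 / 4) * (V b * f b) := by
    rw [hfb]
    exact mul_pos (mul_pos (pow_pos hbpos _) (Real.exp_pos _)) (mul_pos (hVpos b hbR) hfa)
  have hev : ∀ᶠ s in nhdsWithin b (Set.Ioi b), g b < g s :=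
    eventually_gt_right (hdiv b hbR) hgb'
  -- extract δ
  have hev' : ∀ᶠ s in nhdsWithin b (Set.Ioi b), 0 < f' s := by
    filter_upwards [hev, self_mem_nhdsWithin] with s hgs hsmem
    have hspos : 0 < s := lt_trans hbpos hsmem
    have hgpos : 0 < g s := lt_of_le_of_lt hgb hgs
    by_contra hle
    push_neg at hle
    have : g s ≤ 0 := by
      have h1 : f' s * s ^ (m - 1) ≤ 0 :=
        mul_nonpos_iff.2 (Or.inr ⟨hle, (pow_nonneg hspos.le _)⟩)
      exact mul_nonpos_iff.2 (Or.inr ⟨h1, (Real.exp_pos _).le⟩)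
    linarith
  rw [eventually_nhdsWithin_iff, Metric.eventually_nhds_iff] at hev'
  obtain ⟨δ, hδ, hδp⟩ := hev'
  -- there is x ∈ A with x < b + δ
  have hex : ∃ x ∈ A, x < b + δ := by
    by_contra hno
    push_neg at hno
    have := le_csInf hAne hno
    linarith [this]
  obtain ⟨x, hxA, hxlt⟩ := hex
  have hxb : b ≤ x := csInf_le hAbd hxA
  have hxne : b ≠ x := by
    intro heq
    have hx2 : f x < f a := hxA.2
    rw [← heq, hfb] at hx2
    exact absurd hx2 (lt_irrefl _)
  have hbx : b < x := lt_of_le_of_ne hxb hxne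
  have hfx : f b < f x := by
    refine strict_Icc (F := f) (F' := f') (fun y hy => hf y (hbR.trans hy.1)) ?_ hbx
    intro y hy
    apply hδp
    · rw [Real.dist_eq, abs_lt]; constructor <;> [linarith [hy.1]; linarith [hy.2, hxlt]]
    · exact hy.1
  rw [hfb] at hfx
  linarith [hxA.2]
private lemma key_contra (m : ℕ) (R : ℝ) (hR : 0 < R) (f f' V : ℝ → ℝ)
    (hVpos : ∀ r ≥ R, 0 < V r)
    (hf : ∀ r ≥ R, HasDerivAt f (f' r) r)
    (hdiv : ∀ r ≥ R, HasDerivAt (fun s : ℝ => f' s * s ^ (m - 1) * Real.exp (-s ^ 2 / 4))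
      (r ^ (m - 1) * Real.exp (-r ^ 2 / 4) * (V r * f r)) r)
    (hlim : Tendsto f atTop (nhds 0))
    (a : ℝ) (ha : R ≤ a) (hfa : 0 < f a) (hga : 0 ≤ f' a) : False := by
  have h := key m R hR f f' V hVpos hf hdiv a ha hfa hga
  have : f a ≤ 0 := ge_of_tendsto hlim (eventually_atTop.2 ⟨a, fun r hr => h r hr⟩)
  linarith

private lemma hdiv_neg (m : ℕ) (R : ℝ) (f' V : ℝ → ℝ) (f : ℝ → ℝ)
    (hdiv : ∀ r ≥ R, HasDerivAt (fun s : ℝ => f' s * s ^ (m - 1) * Real.exp (-s ^ 2 / 4))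
      (r ^ (m - 1) * Real.exp (-r ^ 2 / 4) * (V r * f r)) r) :
    ∀ r ≥ R, HasDerivAt (fun s : ℝ => (-f' s) * s ^ (m - 1) * Real.exp (-s ^ 2 / 4))
      (r ^ (m - 1) * Real.exp (-r ^ 2 / 4) * (V r * (-f r))) r := by
  intro r hr
  have h1 : (fun s : ℝ => (-f' s) * s ^ (m - 1) * Real.exp (-s ^ 2 / 4))
      = fun s : ℝ => -(f' s * s ^ (m - 1) * Real.exp (-s ^ 2 / 4)) := by
    funext s; ring
  have h2 : r ^ (m - 1) * Real.exp (-r ^ 2 / 4) * (V r * (-f r))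
      = -(r ^ (m - 1) * Real.exp (-r ^ 2 / 4) * (V r * f r)) := by ring
  rw [h1, h2]
  exact (hdiv r hr).neg

private lemma key_contra_neg (m : ℕ) (R : ℝ) (hR : 0 < R) (f f' V : ℝ → ℝ)
    (hVpos : ∀ r ≥ R, 0 < V r)
    (hf : ∀ r ≥ R, HasDerivAt f (f' r) r)
    (hdiv : ∀ r ≥ R, HasDerivAt (fun s : ℝ => f' s * s ^ (m - 1) * Real.exp (-s ^ 2 / 4))
      (r ^ (m - 1) * Real.exp (-r ^ 2 / 4) * (V r * f r)) r)
    (hlim : Tendsto f atTop (nhds 0))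
    (a : ℝ) (ha : R ≤ a) (hfa : f a < 0) (hga : f' a ≤ 0) : False := by
  refine key_contra m R hR (fun s => -f s) (fun s => -f' s) V hVpos
    (fun r hr => (hf r hr).neg) (hdiv_neg m R f' V f hdiv) ?_ a ha ?_ ?_
  · simpa using hlim.neg
  · simpa using hfa
  · simpa using hga

private lemma hw_deriv (n : ℕ) (s : ℝ) :
    HasDerivAt (fun t : ℝ => t ^ n * Real.exp (-t ^ 2 / 4))
      ((n : ℝ) * s ^ (n - 1) * Real.exp (-s ^ 2 / 4)
        + s ^ n * (Real.exp (-s ^ 2 / 4) * (-s / 2))) s := by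
  have h0 : HasDerivAt (fun t : ℝ => -t ^ 2 / 4) (-s / 2) s := by
    have h2 := ((hasDerivAt_pow 2 s).div_const 4).neg
    have h3 : HasDerivAt (fun t : ℝ => -t ^ 2 / 4) (-((2:ℕ) * s ^ (2 - 1) / 4)) s :=
      h2.congr_of_eventuallyEq (Filter.Eventually.of_forall fun t => by rw [Pi.neg_apply]; ring)
    convert h3 using 1
    push_cast
    ring
  exact (hasDerivAt_pow n s).mul h0.exp

private lemma f'_deriv (m : ℕ) (hm : 3 ≤ m) (R : ℝ) (hR : 0 < R) (f f' V : ℝ → ℝ)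
    (hdiv : ∀ r ≥ R, HasDerivAt (fun s : ℝ => f' s * s ^ (m - 1) * Real.exp (-s ^ 2 / 4))
      (r ^ (m - 1) * Real.exp (-r ^ 2 / 4) * (V r * f r)) r) :
    ∀ s ≥ R, HasDerivAt f'
      (V s * f s + f' s * (s / 2 - ((m : ℝ) - 1) / s)) s := by
  intro s hs
  have hspos : 0 < s := lt_of_lt_of_le hR hs
  have hexp : Real.exp (-s ^ 2 / 4) ≠ 0 := (Real.exp_pos _).ne'
  have hwne : s ^ (m - 1) * Real.exp (-s ^ 2 / 4) ≠ 0 :=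
    (mul_pos (pow_pos hspos _) (Real.exp_pos _)).ne'
  have hg := hdiv s hs
  have hw := hw_deriv (m - 1) s
  have hquot := hg.div hw hwne
  have heqf : f' =ᶠ[nhds s]
      fun t => (f' t * t ^ (m - 1) * Real.exp (-t ^ 2 / 4)) / (t ^ (m - 1) * Real.exp (-t ^ 2 / 4)) := by
    filter_upwards [Ioi_mem_nhds hspos] with t ht
    have htne : t ^ (m - 1) * Real.exp (-t ^ 2 / 4) ≠ 0 :=
      (mul_pos (pow_pos ht _) (Real.exp_pos _)).ne'
    rw [eq_div_iff htne]
    ring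
  have hres := hquot.congr_of_eventuallyEq heqf
  refine hres.congr_deriv ?_
  obtain ⟨k, hk⟩ : ∃ k, m = k + 3 := ⟨m - 3, by omega⟩
  subst hk
  have h1 : k + 3 - 1 = k + 2 := by omega
  rw [h1, show k + 2 - 1 = k + 1 by omega]
  push_cast
  field_simp
  ring
private lemma pos_forever (m : ℕ) (hm : 3 ≤ m) (lam lamk R : ℝ) (hR : 0 < R)
    (f f' V : ℝ → ℝ)
    (hV : V = fun r => -lam * Real.exp (-r ^ 2 / (2 * ((m : ℝ) - 2))) + lamk / r ^ 2)
    (hVpos : ∀ r ≥ R, 0 < V r)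
    (hf : ∀ r ≥ R, HasDerivAt f (f' r) r)
    (hdiv : ∀ r ≥ R, HasDerivAt (fun s : ℝ => f' s * s ^ (m - 1) * Real.exp (-s ^ 2 / 4))
      (r ^ (m - 1) * Real.exp (-r ^ 2 / 4) * (V r * f r)) r)
    (hlim : Tendsto f atTop (nhds 0))
    (r₀ : ℝ) (hr₀ : R ≤ r₀) (hfr₀ : 0 < f r₀) : ∀ s ≥ r₀, 0 < f s := by
  have h1 : ∀ s ≥ R, 0 < f s → f' s < 0 := by
    intro s hs hp
    by_contra hc
    push_neg at hc
    exact key_contra m R hR f f' V hVpos hf hdiv hlim s hs hp hc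
  by_contra hcon
  push_neg at hcon
  obtain ⟨s₀, hs₀, hfs₀⟩ := hcon
  set A : Set ℝ := {r : ℝ | r₀ ≤ r ∧ f r ≤ 0} with hA
  have hAne : A.Nonempty := ⟨s₀, hs₀, hfs₀⟩
  have hAbd : BddBelow A := ⟨r₀, fun x hx => hx.1⟩
  set b := sInf A with hbdef
  have hb : r₀ ≤ b := le_csInf hAne (fun x hx => hx.1)
  have hbR : R ≤ b := hr₀.trans hb
  have hbpos : 0 < b := lt_of_lt_of_le hR hbR
  have hpre : ∀ s, r₀ ≤ s → s < b → 0 < f s := by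
    intro s hh1 hh2
    by_contra hlt
    push_neg at hlt
    exact absurd (csInf_le hAbd ⟨hh1, hlt⟩) (not_le.2 hh2)
  have hcontb : ContinuousAt f b := (hf b hbR).continuousAt
  have hfb_le : f b ≤ 0 := by
    by_contra hgt
    push_neg at hgt
    have hnb : {s : ℝ | 0 < f s} ∈ nhds b := hcontb (Ioi_mem_nhds hgt)
    obtain ⟨ε, hε, hball⟩ := Metric.mem_nhds_iff.1 hnb
    have hlb : ∀ x ∈ A, b + ε / 2 ≤ x := by
      intro x hx
      have hxb : b ≤ x := csInf_le hAbd hx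
      by_contra hxl
      push_neg at hxl
      have : x ∈ Metric.ball b ε := by
        rw [Metric.mem_ball, Real.dist_eq, abs_lt]
        constructor <;> linarith
      exact absurd (hball this) (not_lt.2 hx.2)
    have := le_csInf hAne hlb
    linarith
  have hblt : r₀ < b := by
    rcases eq_or_lt_of_le hb with heq | hlt
    · rw [← heq] at hfb_le; linarith
    · exact hlt
  have hfb_ge : 0 ≤ f b := by
    have htend : Tendsto f (nhdsWithin b (Set.Iio b)) (nhds (f b)) :=
      hcontb.continuousWithinAt.tendsto
    refine ge_of_tendsto htend ?_
    filter_upwards [Ico_mem_nhdsLT hblt] with s hs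
    exact (hpre s hs.1 hs.2).le
  have hfb : f b = 0 := le_antisymm hfb_le hfb_ge
  have hf'cont : ContinuousAt f' b := (f'_deriv m hm R hR f f' V hdiv b hbR).continuousAt
  have hf'b_le : f' b ≤ 0 := by
    have htend : Tendsto f' (nhdsWithin b (Set.Iio b)) (nhds (f' b)) :=
      hf'cont.continuousWithinAt.tendsto
    refine le_of_tendsto htend ?_
    filter_upwards [Ico_mem_nhdsLT hblt] with s hs
    exact (h1 s (hr₀.trans hs.1) (hpre s hs.1 hs.2)).le
  rcases hf'b_le.lt_or_eq with hlt | heq0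
  · -- f' b < 0 : f goes negative, use neg side
    have ev1 : ∀ᶠ s in nhdsWithin b (Set.Ioi b), f s < f b :=
      eventually_lt_right (hf b hbR) hlt
    have ev2 : ∀ᶠ s in nhds b, f' s < 0 := hf'cont (Iio_mem_nhds hlt)
    obtain ⟨c, hc1, hc2, hc3⟩ :=
      (ev1.and ((ev2.filter_mono nhdsWithin_le_nhds).and self_mem_nhdsWithin)).exists
    refine key_contra_neg m R hR f f' V hVpos hf hdiv hlim c (hbR.trans (le_of_lt hc3)) ?_ hc2.le
    rw [hfb] at hc1
    exact hc1
  · -- f' b = 0 : backward uniqueness contradiction on [r₁, b]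
    set r₁ := (r₀ + b) / 2 with hr₁def
    have hr₁a : r₀ < r₁ := by rw [hr₁def]; linarith
    have hr₁b : r₁ < b := by rw [hr₁def]; linarith
    have hr₁R : R ≤ r₁ := hr₀.trans hr₁a.le
    have hr₁pos : 0 < r₁ := lt_of_lt_of_le hR hr₁R
    -- bound for the coefficients
    have hVcont : ContinuousOn (fun x : ℝ => |V x| + |x / 2 - ((m : ℝ) - 1) / x|)
        (Set.Icc r₁ b) := by
      apply ContinuousOn.add
      · apply ContinuousOn.abs
        rw [hV]
        apply ContinuousOn.add
        · exact (continuous_const.mul (Real.continuous_exp.comp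
            (by continuity))).continuousOn
        · exact continuousOn_const.div (continuous_pow 2).continuousOn
            (fun x hx => pow_ne_zero 2 (lt_of_lt_of_le hr₁pos hx.1).ne')
      · apply ContinuousOn.abs
        apply ContinuousOn.sub
        · exact (continuous_id.div_const 2).continuousOn
        · exact continuousOn_const.div continuous_id.continuousOn
            (fun x hx => (lt_of_lt_of_le hr₁pos hx.1).ne')
    obtain ⟨M, hM⟩ := isCompact_Icc.exists_bound_of_continuousOn hVcont
    have hMb : ∀ x ∈ Set.Icc r₁ b, V x ≤ M ∧ -M ≤ x / 2 - ((m : ℝ) - 1) / x := by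
      intro x hx
      have h := hM x hx
      rw [Real.norm_eq_abs] at h
      have h' := (abs_le.1 h).2
      have ha1 := abs_nonneg (V x)
      have ha2 := abs_nonneg (x / 2 - ((m : ℝ) - 1) / x)
      constructor
      · linarith [le_abs_self (V x)]
      · linarith [neg_abs_le (x / 2 - ((m : ℝ) - 1) / x)]
    set F : ℝ → ℝ := fun s => (f s - f' s) * Real.exp ((M + 1) * s) with hFdef
    have hFle : F r₁ ≤ F b := by
      apply mono_Icc (F := F) (F' := fun x =>
        (f' x - (V x * f x + f' x * (x / 2 - ((m : ℝ) - 1) / x))) * Real.exp ((M + 1) * x)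
          + (f x - f' x) * (Real.exp ((M + 1) * x) * (M + 1)))
      · intro x hx
        have hxR : R ≤ x := hr₁R.trans hx.1
        have hlin : HasDerivAt (fun t : ℝ => (M + 1) * t) (M + 1) x := by
          simpa using (hasDerivAt_id x).const_mul (M + 1)
        exact ((hf x hxR).sub (f'_deriv m hm R hR f f' V hdiv x hxR)).mul hlin.exp
      · intro x hx
        have hxR : R ≤ x := hr₁R.trans hx.1.le
        have hxr₀ : r₀ ≤ x := hr₁a.le.trans hx.1.le
        have hfx : 0 < f x := hpre x hxr₀ hx.2
        have hf'x : f' x < 0 := h1 x hxR hfx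
        have hxI : x ∈ Set.Icc r₁ b := ⟨hx.1.le, hx.2.le⟩
        obtain ⟨hV1, hV2⟩ := hMb x hxI
        have he : 0 < Real.exp ((M + 1) * x) := Real.exp_pos _
        have t1 : V x * f x ≤ M * f x := mul_le_mul_of_nonneg_right hV1 hfx.le
        have t2 : (-M) * (-f' x) ≤ (x / 2 - ((m : ℝ) - 1) / x) * (-f' x) :=
          mul_le_mul_of_nonneg_right hV2 (by linarith)
        have hkey : 0 ≤ f' x - (V x * f x + f' x * (x / 2 - ((m : ℝ) - 1) / x))
            + (f x - f' x) * (M + 1) := by nlinarith [t1, t2, hfx.le]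
        have hexpand : (f' x - (V x * f x + f' x * (x / 2 - ((m : ℝ) - 1) / x)))
              * Real.exp ((M + 1) * x)
            + (f x - f' x) * (Real.exp ((M + 1) * x) * (M + 1))
            = (f' x - (V x * f x + f' x * (x / 2 - ((m : ℝ) - 1) / x))
              + (f x - f' x) * (M + 1)) * Real.exp ((M + 1) * x) := by ring
        rw [hexpand]
        exact mul_nonneg hkey he.le
      · exact hr₁b.le
    have hFb : F b = 0 := by rw [hFdef]; simp [hfb, heq0]
    have hFr₁ : 0 < F r₁ := by
      rw [hFdef]
      have hfr₁ : 0 < f r₁ := hpre r₁ hr₁a.le hr₁b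
      have hf'r₁ : f' r₁ < 0 := h1 r₁ hr₁R hfr₁
      exact mul_pos (by linarith) (Real.exp_pos _)
    linarith
set_option maxHeartbeats 2000000 in
private lemma main_pos (m : ℕ) (hm : 3 ≤ m) (lam lamk R : ℝ) (hlamk : 0 < lamk) (hR : 0 < R)
    (f f' V : ℝ → ℝ)
    (hV : V = fun r => -lam * Real.exp (-r ^ 2 / (2 * ((m : ℝ) - 2))) + lamk / r ^ 2)
    (hVpos : ∀ r ≥ R, 0 < V r)
    (hf : ∀ r ≥ R, HasDerivAt f (f' r) r)
    (hdiv : ∀ r ≥ R, HasDerivAt (fun s : ℝ => f' s * s ^ (m - 1) * Real.exp (-s ^ 2 / 4))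
      (r ^ (m - 1) * Real.exp (-r ^ 2 / 4) * (V r * f r)) r)
    (hlim : Tendsto f atTop (nhds 0))
    (r₀ : ℝ) (hr₀ : R ≤ r₀) (hfr₀ : 0 < f r₀) : False := by
  have hr₀pos : 0 < r₀ := lt_of_lt_of_le hR hr₀
  set g : ℝ → ℝ := fun s : ℝ => f' s * s ^ (m - 1) * Real.exp (-s ^ 2 / 4) with hgdef
  have hpos : ∀ s ≥ r₀, 0 < f s :=
    pos_forever m hm lam lamk R hR f f' V hV hVpos hf hdiv hlim r₀ hr₀ hfr₀
  have h1 : ∀ s ≥ R, 0 < f s → f' s < 0 := by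
    intro s hs hp
    by_contra hc
    push_neg at hc
    exact key_contra m R hR f f' V hVpos hf hdiv hlim s hs hp hc
  have hq : ∀ s ≥ r₀, f' s < 0 := fun s hs => h1 s (hr₀.trans hs) (hpos s hs)
  have hwpos : ∀ s : ℝ, 0 < s → 0 < s ^ (m - 1) * Real.exp (-s ^ 2 / 4) :=
    fun s hs => mul_pos (pow_pos hs _) (Real.exp_pos _)
  have hgneg : ∀ s ≥ r₀, g s < 0 := by
    intro s hs
    have hspos : 0 < s := lt_of_lt_of_le hr₀pos hs
    have h2 := hq s hs
    have h3 : g s = f' s * (s ^ (m - 1) * Real.exp (-s ^ 2 / 4)) := by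
      simp only [hgdef]; ring
    rw [h3]
    exact mul_neg_of_neg_of_pos h2 (hwpos s hspos)
  have hgmono : ∀ x y, r₀ ≤ x → x ≤ y → g x ≤ g y := by
    intro x y hx hxy
    refine mono_Icc (F := g)
      (F' := fun s => s ^ (m - 1) * Real.exp (-s ^ 2 / 4) * (V s * f s))
      (fun t ht => hdiv t ((hr₀.trans hx).trans ht.1)) ?_ hxy
    intro t ht
    have htr₀ : r₀ ≤ t := hx.trans ht.1.le
    have htR : R ≤ t := hr₀.trans htr₀
    exact (mul_pos (hwpos t (lt_of_lt_of_le hr₀pos htr₀))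
      (mul_pos (hVpos t htR) (hpos t htr₀))).le
  set S := g '' Set.Ici r₀ with hSdef
  have hSne : S.Nonempty := ⟨g r₀, ⟨r₀, Set.self_mem_Ici, rfl⟩⟩
  have hub0 : ∀ y ∈ S, y ≤ (0:ℝ) := by
    rintro y ⟨s, hs, rfl⟩
    exact (hgneg s hs).le
  have hSbdd : BddAbove S := ⟨0, hub0⟩
  set c := sSup S with hcdef
  have hc0 : c ≤ 0 := csSup_le hSne hub0
  rcases hc0.lt_or_eq with hclt | hc0eq
  · -- c < 0 : f' eventually ≤ -1, f goes negative
    have hub : ∀ s ≥ r₀, g s ≤ c := fun s hs => le_csSup hSbdd ⟨s, hs, rfl⟩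
    have hwlim : Tendsto (fun s : ℝ => s ^ (m - 1) * Real.exp (-s ^ 2 / 4)) atTop (nhds 0) := by
      apply squeeze_zero' (g := fun s : ℝ => s ^ (m - 1) * Real.exp (-s))
      · filter_upwards [eventually_ge_atTop (0:ℝ)] with s hs
        exact (mul_nonneg (pow_nonneg hs _) (Real.exp_pos _).le)
      · filter_upwards [eventually_ge_atTop (4:ℝ)] with s hs
        have h4 : -s ^ 2 / 4 ≤ -s := by nlinarith
        exact mul_le_mul_of_nonneg_left (Real.exp_le_exp.2 h4) (pow_nonneg (by linarith) _)
      · exact tendsto_pow_mul_exp_neg_atTop_nhds_zero (m - 1)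
    have hev : ∀ᶠ s in atTop, s ^ (m - 1) * Real.exp (-s ^ 2 / 4) < -c :=
      hwlim.eventually_lt_const (by linarith)
    obtain ⟨N, hN⟩ := eventually_atTop.1 hev
    set r₅ := max N r₀ with hr₅def
    have hr₅r₀ : r₀ ≤ r₅ := le_max_right _ _
    have hstep : ∀ s ≥ r₅, f' s + 1 ≤ 0 := by
      intro s hs
      have hsr₀ : r₀ ≤ s := hr₅r₀.trans hs
      have hw := hN s ((le_max_left _ _).trans hs)
      have hwp := hwpos s (lt_of_lt_of_le hr₀pos hsr₀)
      have hg := hub s hsr₀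
      by_contra hcc
      push_neg at hcc
      have h2 : (-1) * (s ^ (m - 1) * Real.exp (-s ^ 2 / 4))
          < f' s * (s ^ (m - 1) * Real.exp (-s ^ 2 / 4)) :=
        mul_lt_mul_of_pos_right (by linarith) hwp
      have h3 : f' s * (s ^ (m - 1) * Real.exp (-s ^ 2 / 4)) = g s := by
        simp only [hgdef]; ring
      rw [h3] at h2
      linarith
    set T := r₅ + f r₅ + 1 with hTdef
    have hfr₅ : 0 < f r₅ := hpos r₅ hr₅r₀
    have hT : r₅ ≤ T := by rw [hTdef]; linarith
    have hmono := mono_Icc (F := fun s => -(f s + s)) (F' := fun s => -(f' s + 1))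
      (fun x hx => (((hf x (hr₀.trans (hr₅r₀.trans hx.1))).add (hasDerivAt_id x)).neg))
      (fun x hx => by
        have := hstep x hx.1.le
        show (0:ℝ) ≤ -(f' x + 1)
        linarith) hT
    have hfT : 0 < f T := hpos T (hr₅r₀.trans hT)
    rw [hTdef] at hmono hfT
    linarith
  · -- c = 0 : asymptotic comparison
    have hmR : (3:ℝ) ≤ (m:ℝ) := by exact_mod_cast hm
    have hm2 : (0:ℝ) < (m:ℝ) - 2 := by linarith
    obtain ⟨C, hCdef⟩ : ∃ C : ℝ, C = lamk + 1 := ⟨_, rfl⟩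
    obtain ⟨K, hKdef⟩ : ∃ K : ℝ, K = 4 * C := ⟨_, rfl⟩
    have hCpos : 0 < C := by rw [hCdef]; linarith
    have hKpos : 0 < K := by rw [hKdef]; linarith
    have hVev : ∀ᶠ s : ℝ in atTop, V s ≤ C / s ^ 2 := by
      have hβ : 0 < 1 / (2 * ((m:ℝ) - 2)) := by positivity
      have hcomp : Tendsto (fun s : ℝ => (1 / (2 * ((m:ℝ) - 2))) * s ^ 2) atTop atTop :=
        Tendsto.const_mul_atTop hβ (tendsto_pow_atTop (by norm_num))
      have hbase : Tendsto (fun u : ℝ => |lam| * (2 * ((m:ℝ) - 2)) * (u * Real.exp (-u)))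
          atTop (nhds 0) := by
        have h0 := tendsto_pow_mul_exp_neg_atTop_nhds_zero 1
        simp only [pow_one] at h0
        simpa using h0.const_mul (|lam| * (2 * ((m:ℝ) - 2)))
      have hcomb := hbase.comp hcomp
      have hEq : ((fun u : ℝ => |lam| * (2 * ((m:ℝ) - 2)) * (u * Real.exp (-u)))
            ∘ (fun s : ℝ => (1 / (2 * ((m:ℝ) - 2))) * s ^ 2))
          =ᶠ[atTop] fun s : ℝ => |lam| * s ^ 2 * Real.exp (-s ^ 2 / (2 * ((m:ℝ) - 2))) := by
        filter_upwards with s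
        simp only [Function.comp_apply]
        have h1 : -((1 / (2 * ((m:ℝ) - 2))) * s ^ 2) = -s ^ 2 / (2 * ((m:ℝ) - 2)) := by
          field_simp
        rw [h1]
        field_simp
      have hlam := hcomb.congr' hEq
      have hev1 : ∀ᶠ s : ℝ in atTop,
          |lam| * s ^ 2 * Real.exp (-s ^ 2 / (2 * ((m:ℝ) - 2))) < 1 :=
        hlam.eventually_lt_const one_pos
      filter_upwards [hev1, eventually_gt_atTop (0:ℝ)] with s hs1 hs0
      rw [hV]
      have hse : 0 < s ^ 2 := by positivity
      have hE : 0 < Real.exp (-s ^ 2 / (2 * ((m:ℝ) - 2))) := Real.exp_pos _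
      have h3 : -lam ≤ |lam| := neg_le_abs lam
      have h4 : -lam * Real.exp (-s ^ 2 / (2 * ((m:ℝ) - 2)))
          ≤ |lam| * Real.exp (-s ^ 2 / (2 * ((m:ℝ) - 2))) :=
        mul_le_mul_of_nonneg_right h3 hE.le
      have h5 : |lam| * Real.exp (-s ^ 2 / (2 * ((m:ℝ) - 2))) ≤ 1 / s ^ 2 := by
        rw [le_div_iff₀ hse]
        nlinarith
      have h6 : C / s ^ 2 = 1 / s ^ 2 + lamk / s ^ 2 := by
        rw [hCdef]; field_simp; ring
      simp only []
      rw [h6]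
      linarith
    obtain ⟨N₁, hN₁⟩ := eventually_atTop.1 hVev
    set r₄ := max (max N₁ (2 * (m:ℝ))) (max r₀ 1) with hr₄def
    have hr₄r₀ : r₀ ≤ r₄ := (le_max_left _ _).trans (le_max_right _ _)
    have hr₄1 : (1:ℝ) ≤ r₄ := (le_max_right _ _).trans (le_max_right _ _)
    have hr₄pos : 0 < r₄ := lt_of_lt_of_le one_pos hr₄1
    have hr₄m : 2 * (m:ℝ) ≤ r₄ := (le_max_right _ _).trans (le_max_left _ _)
    have hr₄N : N₁ ≤ r₄ := (le_max_left _ _).trans (le_max_left _ _)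
    have hVb : ∀ s, r₄ ≤ s → V s ≤ C / s ^ 2 := fun s hs => hN₁ s (hr₄N.trans hs)
    have hbr : ∀ s, r₄ ≤ s → (m:ℝ) - 4 ≤ s ^ 2 / 4 := by
      intro s hs
      have hs1 : (1:ℝ) ≤ s := hr₄1.trans hs
      have hsm : 2 * (m:ℝ) ≤ s := hr₄m.trans hs
      nlinarith [hmR]
    obtain ⟨p, hpdef⟩ : ∃ p : ℝ, p = (m:ℝ) - 4 := ⟨_, rfl⟩
    obtain ⟨G, hGdef⟩ : ∃ G : ℝ → ℝ, G = fun s => K * s ^ p * Real.exp (-s ^ 2 / 4) := ⟨_, rfl⟩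
    have hGpos : ∀ s : ℝ, 0 < s → 0 < G s := by
      intro s hs
      rw [hGdef]
      exact mul_pos (mul_pos hKpos (Real.rpow_pos_of_pos hs _)) (Real.exp_pos _)
    have hGderiv : ∀ s : ℝ, 0 < s → HasDerivAt G
        (K * (p * s ^ (p - 1)) * Real.exp (-s ^ 2 / 4)
          + K * s ^ p * (Real.exp (-s ^ 2 / 4) * (-s / 2))) s := by
      intro s hs
      rw [hGdef]
      have h0 : HasDerivAt (fun t : ℝ => -t ^ 2 / 4) (-s / 2) s := by
        have h2 := ((hasDerivAt_pow 2 s).div_const 4).neg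
        have h3 : HasDerivAt (fun t : ℝ => -t ^ 2 / 4) (-((2:ℕ) * s ^ (2 - 1) / 4)) s :=
          h2.congr_of_eventuallyEq (Filter.Eventually.of_forall fun t => by rw [Pi.neg_apply]; ring)
        convert h3 using 1
        push_cast
        ring
      have h1 : HasDerivAt (fun t : ℝ => t ^ p) (p * s ^ (p - 1)) s :=
        Real.hasDerivAt_rpow_const (Or.inl hs.ne')
      exact (h1.const_mul K).mul h0.exp
    have hGbound : ∀ s, r₄ ≤ s →
        K * (p * s ^ (p - 1)) * Real.exp (-s ^ 2 / 4)
          + K * s ^ p * (Real.exp (-s ^ 2 / 4) * (-s / 2))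
        ≤ -(s ^ (m - 1) * Real.exp (-s ^ 2 / 4) * V s) := by
      intro s hs
      have hspos : 0 < s := lt_of_lt_of_le hr₄pos hs
      have hsne := hspos.ne'
      have hE : 0 < Real.exp (-s ^ 2 / 4) := Real.exp_pos _
      obtain ⟨A, hAdef⟩ : ∃ A : ℝ, A = s ^ ((m:ℝ) - 5) := ⟨_, rfl⟩
      have hApos : 0 < A := by rw [hAdef]; exact Real.rpow_pos_of_pos hspos _
      have e1 : s ^ (p - 1) = A := by
        rw [hpdef, hAdef]; congr 1; ring
      have e2 : s ^ p = A * s := by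
        rw [hpdef, hAdef, show (m:ℝ) - 4 = ((m:ℝ) - 5) + 1 by ring, Real.rpow_add_one hsne]
      have e3 : (s:ℝ) ^ (m - 1 : ℕ) = A * s * s * s * s := by
        rw [← Real.rpow_natCast s (m - 1), hAdef]
        have hc1 : ((m - 1 : ℕ) : ℝ) = (m:ℝ) - 1 := by
          rw [Nat.cast_sub (by omega : 1 ≤ m), Nat.cast_one]
        rw [hc1, show (m:ℝ) - 1 = ((m:ℝ) - 5) + 1 + 1 + 1 + 1 by ring,
          Real.rpow_add_one hsne, Real.rpow_add_one hsne, Real.rpow_add_one hsne,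
          Real.rpow_add_one hsne]
      rw [e1, e2, e3]
      have hbrs := hbr s hs
      have hVs := hVb s hs
      have h8 : p - s ^ 2 / 2 ≤ -s ^ 2 / 4 := by
        rw [hpdef]
        linarith [hbrs]
      have h9 : A * s * s * s * s * Real.exp (-s ^ 2 / 4) * V s
          ≤ C * (A * s ^ 2) * Real.exp (-s ^ 2 / 4) := by
        have h10 : A * s * s * s * s * Real.exp (-s ^ 2 / 4) * V s
            ≤ A * s * s * s * s * Real.exp (-s ^ 2 / 4) * (C / s ^ 2) := by
          apply mul_le_mul_of_nonneg_left hVs (by positivity)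
        have h10b : A * s * s * s * s * Real.exp (-s ^ 2 / 4) * (C / s ^ 2)
            = C * (A * s ^ 2) * Real.exp (-s ^ 2 / 4) := by
          field_simp
        linarith
      have h11 : K * (p * A) * Real.exp (-s ^ 2 / 4) + K * (A * s) * (Real.exp (-s ^ 2 / 4) * (-s / 2))
          = (K * A * Real.exp (-s ^ 2 / 4)) * (p - s ^ 2 / 2) := by ring
      have h12 : (K * A * Real.exp (-s ^ 2 / 4)) * (p - s ^ 2 / 2)
          ≤ (K * A * Real.exp (-s ^ 2 / 4)) * (-s ^ 2 / 4) :=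
        mul_le_mul_of_nonneg_left h8 (by positivity)
      have h13 : (K * A * Real.exp (-s ^ 2 / 4)) * (-s ^ 2 / 4)
          = -(C * (A * s ^ 2) * Real.exp (-s ^ 2 / 4)) := by
        rw [hKdef]; ring
      rw [h11]
      linarith
    -- the core estimate: 0 ≤ g r + f r * G r  for r ≥ r₄
    have hqb : ∀ r, r₄ ≤ r → 0 ≤ g r + f r * G r := by
      intro r hr
      by_contra hcc
      push_neg at hcc
      have hub2 : ∀ y ∈ S, y ≤ g r + f r * G r := by
        rintro y ⟨s, hs, rfl⟩
        have hs' : r₀ ≤ s := hs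
        have hfrpos : 0 < f r := hpos r (hr₄r₀.trans hr)
        have hGrpos : 0 < G r := hGpos r (lt_of_lt_of_le hr₄pos hr)
        rcases le_total s r with hsr | hrs
        · have h14 : g s ≤ g r := hgmono s r hs' hsr
          nlinarith [mul_pos hfrpos hGrpos]
        · have hanti := mono_Icc (F := fun t => -(g t + f r * G t))
            (F' := fun t => -((t ^ (m - 1) * Real.exp (-t ^ 2 / 4) * (V t * f t))
              + f r * (K * (p * t ^ (p - 1)) * Real.exp (-t ^ 2 / 4)
                + K * t ^ p * (Real.exp (-t ^ 2 / 4) * (-t / 2)))))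
            (fun x hx => by
              have hxR : R ≤ x := hr₀.trans (hr₄r₀.trans (hr.trans hx.1))
              have hxpos : 0 < x := lt_of_lt_of_le hR hxR
              exact ((hdiv x hxR).add ((hGderiv x hxpos).const_mul (f r))).neg)
            (fun x hx => by
              have hx4 : r₄ ≤ x := hr.trans hx.1.le
              have hxr₀ : r₀ ≤ x := hr₄r₀.trans hx4
              have hxR : R ≤ x := hr₀.trans hxr₀
              have hxpos : 0 < x := lt_of_lt_of_le hR hxR
              have hfx_le : f x ≤ f r := by
                have hmono2 := mono_Icc (F := fun t => -(f t)) (F' := fun t => -(f' t))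
                  (fun y hy => (hf y (hr₀.trans (hr₄r₀.trans (hr.trans hy.1)))).neg)
                  (fun y hy => by
                    have := hq y (hr₄r₀.trans (hr.trans hy.1.le))
                    show (0:ℝ) ≤ -(f' y)
                    linarith) hx.1.le
                linarith
              have hGb := hGbound x hx4
              have hwV : 0 ≤ x ^ (m - 1) * Real.exp (-x ^ 2 / 4) * V x :=
                (mul_pos (hwpos x hxpos) (hVpos x hxR)).le
              have hfr : 0 ≤ f r := (hpos r (hr₄r₀.trans hr)).le
              have t1 : x ^ (m - 1) * Real.exp (-x ^ 2 / 4) * (V x * f x)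
                  ≤ (x ^ (m - 1) * Real.exp (-x ^ 2 / 4) * V x) * f r := by
                have t1a := mul_le_mul_of_nonneg_left hfx_le hwV
                nlinarith [t1a]
              have t2 : f r * (K * (p * x ^ (p - 1)) * Real.exp (-x ^ 2 / 4)
                    + K * x ^ p * (Real.exp (-x ^ 2 / 4) * (-x / 2)))
                  ≤ f r * (-(x ^ (m - 1) * Real.exp (-x ^ 2 / 4) * V x)) :=
                mul_le_mul_of_nonneg_left hGb hfr
              nlinarith [t1, t2]) hrs
          have hGspos : 0 < G s := hGpos s (lt_of_lt_of_le hr₀pos hs')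
          nlinarith [hanti, mul_pos hfrpos hGspos]
      have hle := csSup_le hSne hub2
      rw [← hcdef] at hle
      rw [← hc0eq] at hcc
      linarith
    -- pointwise lower bound on f' : f' r ≥ -K f r / r³
    have htarget : ∀ r, r₄ ≤ r → 0 ≤ f' r + K * f r / r ^ 3 := by
      intro r hr
      have hrpos : 0 < r := lt_of_lt_of_le hr₄pos hr
      have hwp := hwpos r hrpos
      have hkey := hqb r hr
      have e2 : (r:ℝ) ^ (m - 1 : ℕ) = r ^ p * r ^ (3:ℕ) := by
        rw [← Real.rpow_natCast r (m - 1), ← Real.rpow_natCast r 3, hpdef,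
          ← Real.rpow_add hrpos]
        congr 1
        rw [Nat.cast_sub (by omega : 1 ≤ m), Nat.cast_one]
        push_cast
        ring
      have hid : (f' r + K * f r / r ^ 3) * (r ^ (m - 1) * Real.exp (-r ^ 2 / 4))
          = g r + f r * G r := by
        simp only [hgdef, hGdef]
        rw [e2]
        field_simp
      by_contra hcc
      push_neg at hcc
      have h15 : (f' r + K * f r / r ^ 3) * (r ^ (m - 1) * Real.exp (-r ^ 2 / 4)) < 0 :=
        mul_neg_of_neg_of_pos hcc hwp
      rw [hid] at h15
      linarith
    -- the weight function ψ is nondecreasing, so f is bounded below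
    obtain ⟨ψ, hψdef⟩ : ∃ ψ : ℝ → ℝ, ψ = fun s => f s * Real.exp (-(K / 2) / s ^ 2) := ⟨_, rfl⟩
    have hψderiv : ∀ s : ℝ, r₄ ≤ s → HasDerivAt ψ
        (f' s * Real.exp (-(K / 2) / s ^ 2)
          + f s * (Real.exp (-(K / 2) / s ^ 2) * (K / s ^ 3))) s := by
      intro s hs
      rw [hψdef]
      have hspos : 0 < s := lt_of_lt_of_le hr₄pos hs
      have hsR : R ≤ s := hr₀.trans (hr₄r₀.trans hs)
      have hne : s ^ 2 ≠ 0 := by positivity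
      have h2 := (hasDerivAt_pow 2 s).inv hne
      have h3 := h2.const_mul (-(K / 2))
      have h4 : HasDerivAt (fun t : ℝ => -(K / 2) / t ^ 2)
          (-(K / 2) * (-(((2:ℕ)) * s ^ (2 - 1)) / (s ^ 2) ^ 2)) s :=
        h3.congr_of_eventuallyEq (Filter.Eventually.of_forall fun t => by
          simp only [div_eq_mul_inv, Pi.inv_apply])
      have h5 : HasDerivAt (fun t : ℝ => -(K / 2) / t ^ 2) (K / s ^ 3) s := by
        convert h4 using 1
        field_simp
        ring
      exact (hf s hsR).mul h5.exp
    have hψmono : ∀ s, r₄ ≤ s → ψ r₄ ≤ ψ s := by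
      intro s hs
      refine mono_Icc (F := ψ)
        (F' := fun x => f' x * Real.exp (-(K / 2) / x ^ 2)
          + f x * (Real.exp (-(K / 2) / x ^ 2) * (K / x ^ 3)))
        (fun x hx => hψderiv x hx.1) ?_ hs
      intro x hx
      have hx4 : r₄ ≤ x := hx.1.le
      have ht := htarget x hx4
      have hE : 0 < Real.exp (-(K / 2) / x ^ 2) := Real.exp_pos _
      have hexpand : f' x * Real.exp (-(K / 2) / x ^ 2)
          + f x * (Real.exp (-(K / 2) / x ^ 2) * (K / x ^ 3))
          = (f' x + K * f x / x ^ 3) * Real.exp (-(K / 2) / x ^ 2) := by ring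
      show (0:ℝ) ≤ f' x * Real.exp (-(K / 2) / x ^ 2)
          + f x * (Real.exp (-(K / 2) / x ^ 2) * (K / x ^ 3))
      rw [hexpand]
      exact mul_nonneg ht hE.le
    have hδpos : 0 < f r₄ * Real.exp (-(K / 2) / r₄ ^ 2) :=
      mul_pos (hpos r₄ hr₄r₀) (Real.exp_pos _)
    have hlb : ∀ s ≥ r₄, f r₄ * Real.exp (-(K / 2) / r₄ ^ 2) ≤ f s := by
      intro s hs
      have h17 := hψmono s hs
      simp only [hψdef] at h17
      have hspos : 0 < s := lt_of_lt_of_le hr₄pos hs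
      have h18 : -(K / 2) / s ^ 2 ≤ 0 := by
        apply div_nonpos_iff.2
        right
        constructor
        · linarith
        · positivity
      have hE2 : Real.exp (-(K / 2) / s ^ 2) ≤ 1 := Real.exp_le_one_iff.2 h18
      have hfs := hpos s (hr₄r₀.trans hs)
      nlinarith [h17, hE2, hfs]
    have hfinal : f r₄ * Real.exp (-(K / 2) / r₄ ^ 2) ≤ 0 :=
      ge_of_tendsto hlim (eventually_atTop.2 ⟨r₄, hlb⟩)
    linarith
/-- Maximum-principle argument: a solution of the divergence-form ODE
`(f' r^{m−1} e^{-r²/4})' = r^{m−1} e^{-r²/4} V(r) f` with positive potential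
`V(r) = −λ e^{-r²/(2(m−2))} + λ_k/r² > 0` on `[R, ∞)` which tends to `0` at infinity must
vanish identically on `[R, ∞)`. -/
theorem decaying_solution_vanishes (m : ℕ) (hm : 3 ≤ m) (lam lamk R : ℝ)
    (hlamk : 0 < lamk) (hR : 0 < R)
    (f f' : ℝ → ℝ) (V : ℝ → ℝ)
    (hV : V = fun r => -lam * Real.exp (-r ^ 2 / (2 * ((m : ℝ) - 2))) + lamk / r ^ 2)
    (hVpos : ∀ r ≥ R, 0 < V r)
    (hf : ∀ r ≥ R, HasDerivAt f (f' r) r)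
    (hdiv : ∀ r ≥ R, HasDerivAt (fun s : ℝ => f' s * s ^ (m - 1) * Real.exp (-s ^ 2 / 4))
      (r ^ (m - 1) * Real.exp (-r ^ 2 / 4) * (V r * f r)) r)
    (hlim : Tendsto f atTop (nhds 0)) :
    ∀ r ≥ R, f r = 0 := by
  intro r hr
  by_contra hne
  rcases lt_trichotomy (f r) 0 with hlt | heq | hgt
  · exact main_pos m hm lam lamk R hlamk hR (fun s => -f s) (fun s => -f' s) V hV hVpos
      (fun t ht => (hf t ht).neg) (hdiv_neg m R f' V f hdiv)
      (by simpa using hlim.neg) r hr (by simpa using hlt)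
  · exact hne heq
  · exact main_pos m hm lam lamk R hlamk hR f f' V hV hVpos hf hdiv hlim r hr hgt
end
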